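/- Let u be subharmonic on Ω ⊂ ℝⁿ and continuous, x₀ ∈ Ω_{(2A+1)δ} for A > 2, and suppose y₀, ξ₀ ∈ B̄(x₀,δ) realize the oscillation O_δu(x₀) = u(y₀) - u(ξ₀); set a = A-2, r = Aδ. Then the volume mean satisfies Λ_ru(ξ₀) - u(ξ₀) ≥ O_δu(x₀) - (1 - aⁿ/(a+2)ⁿ)·O_{r+δ}u(x₀). -/

import Mathlib

open MeasureTheory Metric Set Filter

noncomputable section

/-- Subharmonicity via the sub-mean value property over closed balls. -/
def SubharmonicOn {n : ℕ} (u : EuclideanSpace ℝ (Fin n) → ℝ)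
    (Ω : Set (EuclideanSpace ℝ (Fin n))) : Prop :=
  UpperSemicontinuousOn u Ω ∧ LocallyIntegrableOn u Ω ∧
    ∀ x r, 0 < r → closedBall x r ⊆ Ω → u x ≤ ⨍ y in closedBall x r, u y

/-- The surface measure on the unit sphere of `ℝⁿ`. -/
def sphereMeasure (n : ℕ) : Measure (sphere (0 : EuclideanSpace ℝ (Fin n)) 1) :=
  (volume : Measure (EuclideanSpace ℝ (Fin n))).toSphere

/-- Total area `σ_{n-1}` of the unit sphere of `ℝⁿ`. -/
def sphereArea (n : ℕ) : ℝ := ((sphereMeasure n) univ).toReal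

/-- Spherical mean `A_s u (x)` of `u` over the sphere of radius `s` centered at `x`. -/
def sphericalMean {n : ℕ} (u : EuclideanSpace ℝ (Fin n) → ℝ)
    (x : EuclideanSpace ℝ (Fin n)) (s : ℝ) : ℝ :=
  (sphereArea n)⁻¹ * ∫ ξ, u (x + s • (ξ : EuclideanSpace ℝ (Fin n))) ∂(sphereMeasure n)

/-- Volume mean `Λ_δ u (x)` of `u` over the ball of radius `δ` centered at `x`. -/
def volumeMean {n : ℕ} (u : EuclideanSpace ℝ (Fin n) → ℝ)
    (x : EuclideanSpace ℝ (Fin n)) (δ : ℝ) : ℝ :=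
  ⨍ y in ball x δ, u y

/-- Max characteristic `M_δ u (x) = max_{|y-x| ≤ δ} u (y)`. -/
def maxBall {n : ℕ} (u : EuclideanSpace ℝ (Fin n) → ℝ)
    (x : EuclideanSpace ℝ (Fin n)) (δ : ℝ) : ℝ :=
  sSup (u '' closedBall x δ)

/-- Oscillation of `u` on a set. -/
def oscOn {n : ℕ} (u : EuclideanSpace ℝ (Fin n) → ℝ)
    (s : Set (EuclideanSpace ℝ (Fin n))) : ℝ :=
  sSup (u '' s) - sInf (u '' s)

/-- `Ω_δ = {x ∈ Ω : dist(x, ∂Ω) > δ}`. -/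
def shrink {n : ℕ} (Ω : Set (EuclideanSpace ℝ (Fin n))) (δ : ℝ) :
    Set (EuclideanSpace ℝ (Fin n)) :=
  {x ∈ Ω | δ < Metric.infDist x Ωᶜ}

/-- Regularization `R_δ u (x)` by a radial kernel `ρ` (given as a function of the radius). -/
def radialReg {n : ℕ} (ρ : ℝ → ℝ) (u : EuclideanSpace ℝ (Fin n) → ℝ)
    (x : EuclideanSpace ℝ (Fin n)) (δ : ℝ) : ℝ :=
  ∫ ξ in ball (0 : EuclideanSpace ℝ (Fin n)) 1, u (x + δ • ξ) * ρ ‖ξ‖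

/-- A modulus of continuity: continuous, increasing, subadditive, vanishing at `0`. -/
structure ModulusOfContinuity (κ : ℝ → ℝ) : Prop where
  continuous : ContinuousOn κ (Ici 0)
  mono : ∀ s t, 0 ≤ s → s ≤ t → κ s ≤ κ t
  subadd : ∀ s t, 0 ≤ s → 0 ≤ t → κ (s + t) ≤ κ s + κ t
  zero : κ 0 = 0
  nonneg : ∀ t, 0 ≤ t → 0 ≤ κ t

end

theorem stmt14 (n : ℕ) (hn : 1 ≤ n) (Ω : Set (EuclideanSpace ℝ (Fin n)))
    (hΩo : IsOpen Ω) (hΩc : IsConnected Ω)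
    (u : EuclideanSpace ℝ (Fin n) → ℝ) (hu : SubharmonicOn u Ω)
    (hcont : ContinuousOn u Ω)
    (A δ : ℝ) (hA : 2 < A) (hδ : 0 < δ)
    (x₀ : EuclideanSpace ℝ (Fin n)) (hx₀ : x₀ ∈ shrink Ω ((2 * A + 1) * δ))
    (y₀ ξ₀ : EuclideanSpace ℝ (Fin n))
    (hy₀ : y₀ ∈ closedBall x₀ δ) (hξ₀ : ξ₀ ∈ closedBall x₀ δ)
    (hosc : oscOn u (ball x₀ δ) = u y₀ - u ξ₀) :
    oscOn u (ball x₀ δ) -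
        (1 - (A - 2) ^ n / A ^ n) * oscOn u (ball x₀ (A * δ + δ)) ≤
      volumeMean u ξ₀ (A * δ) - u ξ₀ := by
  haveI : Nonempty (Fin n) := ⟨⟨0, hn⟩⟩
  haveI : Nontrivial (EuclideanSpace ℝ (Fin n)) := inferInstance
  set a : ℝ := A - 2 with ha_def
  have ha : 0 < a := by simp [ha_def]; linarith
  have hApos : 0 < A := by linarith
  set r : ℝ := A * δ with hr_def
  have hr : 0 < r := by positivity
  have haδ : 0 < a * δ := by positivity
  clear_value a r
  rw [mem_closedBall] at hy₀ hξ₀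
  -- geometry
  have hΩsub : closedBall x₀ ((2 * A + 1) * δ) ⊆ Ω := by
    intro z hz
    by_contra hzΩ
    have := Metric.infDist_le_dist_of_mem (x := x₀) (show z ∈ Ωᶜ from hzΩ)
    rw [mem_closedBall, dist_comm] at hz
    exact absurd hx₀.2 (by push_neg; linarith)
  have hsubΩ1 : closedBall x₀ (r + δ) ⊆ Ω :=
    (closedBall_subset_closedBall (by nlinarith)).trans hΩsub
  have hsub1 : ball y₀ (a * δ) ⊆ ball ξ₀ r := by
    intro z hz
    rw [mem_ball] at hz ⊢
    have h1 : dist z ξ₀ ≤ dist z y₀ + dist y₀ x₀ + dist x₀ ξ₀ := dist_triangle4 z y₀ x₀ ξ₀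
    rw [dist_comm x₀ ξ₀] at h1
    have : a * δ + δ + δ = r := by simp [ha_def, hr_def]; ring
    linarith
  have hsub2 : ball ξ₀ r ⊆ ball x₀ (r + δ) := by
    intro z hz
    rw [mem_ball] at hz ⊢
    have := dist_triangle z ξ₀ x₀
    linarith
  have hsubcb : ball ξ₀ r ⊆ closedBall x₀ (r + δ) :=
    hsub2.trans ball_subset_closedBall
  have hcbyΩ : closedBall y₀ (a * δ) ⊆ Ω := by
    refine Subset.trans ?_ hsubΩ1
    intro z hz
    rw [mem_closedBall] at hz ⊢
    have := dist_triangle z y₀ x₀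
    have : dist z x₀ ≤ a * δ + δ := by linarith
    nlinarith
  -- integrability on closedBall x₀ (r+δ)
  have hK : IsCompact (closedBall x₀ (r + δ)) := isCompact_closedBall _ _
  have hintK : IntegrableOn u (closedBall x₀ (r + δ)) :=
    (hcont.mono hsubΩ1).integrableOn_compact hK
  have hint1 : IntegrableOn u (ball ξ₀ r) := hintK.mono_set hsubcb
  have hintb : IntegrableOn u (ball y₀ (a * δ)) := hint1.mono_set hsub1
  have hintd : IntegrableOn u (ball ξ₀ r \ ball y₀ (a * δ)) :=
    hint1.mono_set diff_subset
  -- sup and inf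
  set M : ℝ := sSup (u '' ball x₀ (r + δ)) with hM_def
  set m : ℝ := sInf (u '' ball x₀ (r + δ)) with hm_def
  clear_value M m
  have hbddK : BddAbove (u '' closedBall x₀ (r + δ)) ∧
      BddBelow (u '' closedBall x₀ (r + δ)) := by
    have := hK.image_of_continuousOn (hcont.mono hsubΩ1)
    exact ⟨this.bddAbove, this.bddBelow⟩
  have hbA : BddAbove (u '' ball x₀ (r + δ)) :=
    hbddK.1.mono (image_mono ball_subset_closedBall)
  have hbB : BddBelow (u '' ball x₀ (r + δ)) :=
    hbddK.2.mono (image_mono ball_subset_closedBall)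
  have hy₀mem : y₀ ∈ ball x₀ (r + δ) := by rw [mem_ball]; nlinarith
  have hyM : u y₀ ≤ M := by
    rw [hM_def]; exact le_csSup hbA (mem_image_of_mem u hy₀mem)
  have hmle : ∀ z ∈ ball ξ₀ r, m ≤ u z := by
    intro z hz
    rw [hm_def]; exact csInf_le hbB (mem_image_of_mem u (hsub2 hz))
  -- measures
  have hfr : Module.finrank ℝ (EuclideanSpace ℝ (Fin n)) = n := finrank_euclideanSpace_fin
  set B : ℝ := (volume (ball (0 : EuclideanSpace ℝ (Fin n)) 1)).toReal with hB_def
  clear_value B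
  have hBpos : 0 < B := by
    rw [hB_def]
    exact ENNReal.toReal_pos (measure_ball_pos _ _ one_pos).ne' measure_ball_lt_top.ne
  have hvol : ∀ (x : EuclideanSpace ℝ (Fin n)) (s : ℝ), 0 ≤ s →
      (volume (ball x s)).toReal = s ^ n * B := by
    intro x s hs
    rw [hB_def, Measure.addHaar_ball _ _ hs, hfr, ENNReal.toReal_mul,
      ENNReal.toReal_ofReal (by positivity)]
  set V : ℝ := (volume (ball ξ₀ r)).toReal with hV_def
  set Va : ℝ := (volume (ball y₀ (a * δ))).toReal with hVa_def
  clear_value V Va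
  have hV : V = r ^ n * B := by rw [hV_def]; exact hvol _ _ hr.le
  have hVa : Va = (a * δ) ^ n * B := by rw [hVa_def]; exact hvol _ _ haδ.le
  have hVpos : 0 < V := by rw [hV]; positivity
  have hVapos : 0 < Va := by rw [hVa]; positivity
  have hVaV : Va ≤ V := by
    rw [hV_def, hVa_def]
    exact ENNReal.toReal_mono (measure_ball_lt_top.ne) (measure_mono hsub1)
  -- sub-mean value at y₀ over ball y₀ (a δ)
  have haecb : (ball y₀ (a * δ) : Set (EuclideanSpace ℝ (Fin n))) =ᵐ[volume]
      closedBall y₀ (a * δ) := by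
    rw [Filter.eventuallyEq_set]
    have h0 : volume (closedBall y₀ (a * δ) \ ball y₀ (a * δ)) = 0 := by
      rw [closedBall_diff_ball]
      exact Measure.addHaar_sphere _ _ _
    filter_upwards [measure_eq_zero_iff_ae_notMem.mp h0] with z hz
    simp only [mem_diff, not_and, not_not] at hz
    constructor
    · exact fun h => ball_subset_closedBall h
    · intro h
      exact hz h
  have hsmv : u y₀ ≤ ⨍ y in closedBall y₀ (a * δ), u y := hu.2.2 y₀ (a * δ) haδ hcbyΩ
  have hmeq : volume (closedBall y₀ (a * δ)) = volume (ball y₀ (a * δ)) :=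
    Measure.addHaar_closedBall_eq_addHaar_ball (volume : Measure (EuclideanSpace ℝ (Fin n))) y₀ (a * δ)
  have hieq : ∫ y in closedBall y₀ (a * δ), u y = ∫ y in ball y₀ (a * δ), u y :=
    (setIntegral_congr_set haecb.symm)
  have hsmv' : Va * u y₀ ≤ ∫ y in ball y₀ (a * δ), u y := by
    rw [setAverage_eq, measureReal_def, hmeq, hieq, ← hVa_def, smul_eq_mul] at hsmv
    calc Va * u y₀ ≤ Va * (Va⁻¹ * ∫ y in ball y₀ (a * δ), u y) := by
          exact mul_le_mul_of_nonneg_left hsmv hVapos.le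
      _ = ∫ y in ball y₀ (a * δ), u y := by field_simp
  -- lower bound on diff
  have hmd : MeasurableSet (ball ξ₀ r \ ball y₀ (a * δ)) :=
    measurableSet_ball.diff measurableSet_ball
  have hmeasd : (volume (ball ξ₀ r \ ball y₀ (a * δ))).toReal = V - Va := by
    rw [measure_diff hsub1 measurableSet_ball.nullMeasurableSet measure_ball_lt_top.ne,
      ENNReal.toReal_sub_of_le (measure_mono hsub1) measure_ball_lt_top.ne, ← hV_def, ← hVa_def]
  have hdiffle : m * (V - Va) ≤ ∫ y in ball ξ₀ r \ ball y₀ (a * δ), u y := by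
    have := setIntegral_ge_of_const_le_real (c := m) hmd
      (ne_of_lt (lt_of_le_of_lt (measure_mono diff_subset) measure_ball_lt_top))
      (fun z hz => hmle z hz.1) hintd
    rwa [measureReal_def, hmeasd] at this
  -- split the integral
  have hsplit : ∫ y in ball ξ₀ r, u y =
      (∫ y in ball y₀ (a * δ), u y) + ∫ y in ball ξ₀ r \ ball y₀ (a * δ), u y := by
    rw [← setIntegral_union disjoint_sdiff_right hmd hintb hintd,
      union_diff_cancel hsub1]
  -- main estimate
  have hmain : Va * u y₀ + m * (V - Va) ≤ V * volumeMean u ξ₀ r := by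
    have : volumeMean u ξ₀ r = V⁻¹ * ∫ y in ball ξ₀ r, u y := by
      rw [volumeMean, setAverage_eq, measureReal_def, ← hV_def, smul_eq_mul]
    rw [this, hsplit]
    have : V * (V⁻¹ * ((∫ y in ball y₀ (a * δ), u y) +
        ∫ y in ball ξ₀ r \ ball y₀ (a * δ), u y)) =
        (∫ y in ball y₀ (a * δ), u y) + ∫ y in ball ξ₀ r \ ball y₀ (a * δ), u y := by
      field_simp
    rw [this]
    linarith
  -- ratio
  have hratio : Va / V = a ^ n / A ^ n := by
    rw [hV, hVa, hr_def, mul_pow, mul_pow]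
    field_simp
  -- osc on big ball
  have hoscbig : oscOn u (ball x₀ (r + δ)) = M - m := by
    rw [oscOn, hM_def, hm_def]
  have hmM : m ≤ M := by
    rw [hm_def, hM_def]
    exact csInf_le_csSup ⟨_, mem_image_of_mem u hy₀mem⟩ hbB hbA
  -- conclude
  rw [hosc, hoscbig]
  have ht1 : Va / V ≤ 1 := by
    rw [div_le_one hVpos]; exact hVaV
  set w : ℝ := volumeMean u ξ₀ r with hw_def
  clear_value w
  set b1 : ℝ := u y₀ with hb1
  set b2 : ℝ := u ξ₀ with hb2
  clear_value b1 b2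
  have hVM : (Va / V) * b1 + (1 - Va / V) * m ≤ w := by
    have heq : (Va / V) * b1 + (1 - Va / V) * m = (Va * b1 + m * (V - Va)) / V := by
      field_simp
    rw [heq, div_le_iff₀ hVpos]
    nlinarith only [hmain, hVpos]
  rw [← hratio]
  have hkey : (1 - Va / V) * b1 ≤ (1 - Va / V) * M :=
    mul_le_mul_of_nonneg_left hyM (sub_nonneg.mpr ht1)
  linarith only [hkey, hVM]
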